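/- Let d ∈ ℕ and let P ∈ ℂ[x] be a polynomial with deg P ≤ d such that |P(x)| ≤ 1 for every x ∈ ℂ with |x| = 1. Then there exist θ, φ ∈ ℝ^{d+1} and λ ∈ ℝ such that for every N ≥ 1 and every N×N unitary matrix U, the top-left N×N block of (∏_{j=1}^{d} R(θ_j, φ_j, 0)·A) · R(θ_0, φ_0, λ) equals P(U), where A = |0⟩⟨0| ⊗ U + |1⟩⟨1| ⊗ I_N. -/

import Mathlib

open Matrix Kronecker

/-- The single-qubit rotation `R(θ,φ,λ)` tensored with the `N×N` identity:
`R(θ,φ,λ) = [[e^{i(λ+φ)}cos θ, e^{iφ} sin θ], [e^{iλ} sin θ, -cos θ]] ⊗ I_N`. -/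
noncomputable def gqspR (N : ℕ) (θ φ lam : ℝ) : Matrix (Fin 2 × Fin N) (Fin 2 × Fin N) ℂ :=
  (!![Complex.exp (Complex.I * ((lam : ℂ) + (φ : ℂ))) * (Real.cos θ : ℂ),
      Complex.exp (Complex.I * (φ : ℂ)) * (Real.sin θ : ℂ);
      Complex.exp (Complex.I * (lam : ℂ)) * (Real.sin θ : ℂ),
      -(Real.cos θ : ℂ)] : Matrix (Fin 2) (Fin 2) ℂ) ⊗ₖ (1 : Matrix (Fin N) (Fin N) ℂ)

/-- The anti-controlled evolution operator `A = |0⟩⟨0| ⊗ U + |1⟩⟨1| ⊗ I_N`. -/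
noncomputable def gqspA (N : ℕ) (U : Matrix (Fin N) (Fin N) ℂ) :
    Matrix (Fin 2 × Fin N) (Fin 2 × Fin N) ℂ :=
  (!![1, 0; 0, 0] : Matrix (Fin 2) (Fin 2) ℂ) ⊗ₖ U +
    (!![0, 0; 0, 1] : Matrix (Fin 2) (Fin 2) ℂ) ⊗ₖ (1 : Matrix (Fin N) (Fin N) ℂ)

/-- The interleaved GQSP circuit `(∏_{j=1}^d R(θ_j,φ_j,0) A) R(θ_0,φ_0,λ)`
(the factor with the largest index `j = d` acting first on the right of the
`j = 1, …, d` factors, and `R(θ_0,φ_0,λ)` acting first of all). -/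
noncomputable def gqspCircuit (N d : ℕ) (U : Matrix (Fin N) (Fin N) ℂ)
    (θ φ : Fin (d + 1) → ℝ) (lam : ℝ) : Matrix (Fin 2 × Fin N) (Fin 2 × Fin N) ℂ :=
  (List.ofFn fun j : Fin d => gqspR N (θ j.succ) (φ j.succ) 0 * gqspA N U).prod *
    gqspR N (θ 0) (φ 0) lam

/-- The top-left `N×N` block of a `2N×2N` block matrix. -/
def block00 (N : ℕ) (W : Matrix (Fin 2 × Fin N) (Fin 2 × Fin N) ℂ) :
    Matrix (Fin N) (Fin N) ℂ :=
  Matrix.of fun i j => W (0, i) (0, j)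

/-- The bottom-left `N×N` block of a `2N×2N` block matrix. -/
def block10 (N : ℕ) (W : Matrix (Fin 2 × Fin N) (Fin 2 × Fin N) ℂ) :
    Matrix (Fin N) (Fin N) ℂ :=
  Matrix.of fun i j => W (1, i) (0, j)



section Aux
open Polynomial Complex Filter

lemma circle_infinite : {z : ℂ | ‖z‖ = 1}.Infinite := by
  apply Set.infinite_of_injective_forall_mem (f := fun n : ℕ => Complex.exp (Complex.I * n))
  case hi =>
    intro a b hab
    rw [Complex.exp_eq_exp_iff_exists_int] at hab
    obtain ⟨k, hk⟩ := hab
    have h1 : (a : ℂ) = (b : ℂ) + k * (2 * Real.pi) := by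
      have hI : Complex.I ≠ 0 := Complex.I_ne_zero
      apply mul_left_cancel₀ hI
      rw [hk]; ring
    have h2 : (a : ℝ) = (b : ℝ) + k * (2 * Real.pi) := by
      exact_mod_cast congrArg Complex.re h1
    by_cases hk0 : k = 0
    · subst hk0; simp at h2; exact_mod_cast h2
    · exfalso
      have hk0' : (k : ℝ) ≠ 0 := Int.cast_ne_zero.mpr hk0
      have : Real.pi = (((a : ℚ) - b) / (2 * k) : ℚ) := by
        push_cast
        field_simp
        nlinarith [h2]
      exact irrational_pi.ne_rat _ this
  case hf =>
    intro n
    simp [Set.mem_setOf_eq, Complex.norm_exp]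

lemma eq_on_circle {f g : Polynomial ℂ} (h : ∀ z : ℂ, ‖z‖ = 1 → f.eval z = g.eval z) :
    f = g := by
  have h0 : f - g = 0 := by
    apply Polynomial.eq_zero_of_infinite_isRoot
    apply Set.Infinite.mono _ circle_infinite
    intro z hz
    simp only [Set.mem_setOf_eq, Polynomial.IsRoot, Polynomial.eval_sub, sub_eq_zero]
    exact h z hz
  exact sub_eq_zero.mp h0

lemma natDegree_reflect_le {p : Polynomial ℂ} {N : ℕ} (hp : p.natDegree ≤ N) :
    (Polynomial.reflect N p).natDegree ≤ N := by
  rw [Polynomial.natDegree_le_iff_coeff_eq_zero]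
  intro m hm
  rw [Polynomial.coeff_reflect]
  show p.coeff (if m ≤ N then N - m else m) = 0
  simp only [if_neg (by omega : ¬ m ≤ N)]
  exact Polynomial.coeff_eq_zero_of_natDegree_lt (by omega)

/-- `reflectConj N F := reflect N (F.map conj)`; its eval off zero. -/
lemma eval_reflect_map_conj {F : Polynomial ℂ} {N : ℕ} (hF : F.natDegree ≤ N) (w : ℂ)
    (hw : w ≠ 0) :
    (Polynomial.reflect N (F.map (starRingEnd ℂ))).eval w
      = w ^ N * (starRingEnd ℂ) (F.eval ((starRingEnd ℂ) w)⁻¹) := by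
  have hmap : (F.map (starRingEnd ℂ)).natDegree ≤ N := by
    classical
    rcases eq_or_ne F 0 with rfl | hF0
    · simp
    · rw [Polynomial.natDegree_map]; exact hF
  have hd : (Polynomial.reflect N (F.map (starRingEnd ℂ))).natDegree < N + 1 :=
    lt_of_le_of_lt (natDegree_reflect_le hmap) (Nat.lt_succ_self N)
  rw [Polynomial.eval_eq_sum_range' hd]
  have hd2 : F.natDegree < N + 1 := lt_of_le_of_lt hF (Nat.lt_succ_self N)
  rw [Polynomial.eval_eq_sum_range' hd2]
  rw [map_sum, Finset.mul_sum]
  rw [← Finset.sum_range_reflect]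
  apply Finset.sum_congr rfl
  intro i hi
  rw [Finset.mem_range] at hi
  have hiN : N + 1 - 1 - i = N - i := by omega
  rw [hiN, Polynomial.coeff_reflect, Polynomial.coeff_map,
    Polynomial.revAt_le (by omega : N - i ≤ N)]
  have : N - (N - i) = i := by omega
  rw [this]
  rw [_root_.map_mul, _root_.map_pow, map_inv₀, Complex.conj_conj]
  have hwi : i ≤ N := by omega
  field_simp
  rw [one_div, inv_pow, pow_sub₀ _ hw hwi, mul_assoc]

noncomputable def posReals : Set ℂ := {z : ℂ | 0 ≤ z.re ∧ z.im = 0}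

lemma posReals_closed : IsClosed posReals := by
  have : posReals = (Complex.re ⁻¹' Set.Ici 0) ∩ (Complex.im ⁻¹' {0}) := by
    ext z; simp [posReals, Set.mem_setOf_eq]
  rw [this]
  exact (isClosed_Ici.preimage Complex.continuous_re).inter
    (isClosed_singleton.preimage Complex.continuous_im)

lemma exp_I_ne_one {t : ℝ} (h0 : 0 < t) (h1 : t ≤ 1) :
    Complex.exp (Complex.I * (t : ℂ)) ≠ 1 := by
  intro hE
  rw [Complex.exp_eq_one_iff] at hE
  obtain ⟨n, hn⟩ := hE
  have him : t = n * (2 * Real.pi) := by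
    have h2 := congrArg Complex.im hn
    simpa using h2
  rcases lt_trichotomy n 0 with hn0 | hn0 | hn0
  · have hn1 : (n : ℝ) ≤ -1 := by exact_mod_cast (by omega : n ≤ -1)
    nlinarith [Real.pi_gt_three]
  · subst hn0; simp at him; linarith
  · have hn1 : (1 : ℝ) ≤ n := by exact_mod_cast (by omega : 1 ≤ n)
    nlinarith [Real.pi_gt_three]

lemma pos_extend {m : ℕ} {G : Polynomial ℂ} {r : ℂ} (hr : ‖r‖ = 1)
    (h : ∀ z : ℂ, ‖z‖ = 1 → z ≠ r → ∃ x : ℝ, 0 ≤ x ∧ G.eval z = z ^ m * x) :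
    ∀ z : ℂ, ‖z‖ = 1 → ∃ x : ℝ, 0 ≤ x ∧ G.eval z = z ^ m * x := by
  intro z hz
  by_cases hzr : z = r
  swap
  · exact h z hz hzr
  subst hzr
  clear hz
  have hr0 : z ≠ 0 := by
    intro h0; rw [h0] at hr; simp at hr
  set f : ℂ → ℂ := fun w => ((starRingEnd ℂ) w) ^ m * G.eval w with hf
  have hcont : Continuous f := by
    apply Continuous.mul
    · exact (Complex.continuous_conj).pow m
    · exact G.continuous_aeval
  set u : ℕ → ℂ := fun k => z * Complex.exp (Complex.I * ((1 / ((k : ℝ) + 1) : ℝ) : ℂ)) with hu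
  have hulim : Tendsto u atTop (nhds z) := by
    have h1 : Tendsto (fun k : ℕ => (1 / ((k : ℝ) + 1))) atTop (nhds 0) :=
      tendsto_one_div_add_atTop_nhds_zero_nat
    have hc : Continuous (fun t : ℝ => Complex.exp (Complex.I * (t : ℂ))) :=
      Complex.continuous_exp.comp (continuous_const.mul Complex.continuous_ofReal)
    have h2 : Tendsto (fun k : ℕ => Complex.exp (Complex.I * ((1 / ((k : ℝ) + 1) : ℝ) : ℂ)))
        atTop (nhds (Complex.exp (Complex.I * ((0 : ℝ) : ℂ)))) := (hc.tendsto 0).comp h1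
    have h3 : Complex.exp (Complex.I * ((0 : ℝ) : ℂ)) = 1 := by simp
    rw [h3] at h2
    have h4 := tendsto_const_nhds (x := z) (f := atTop (α := ℕ)) |>.mul h2
    rw [mul_one] at h4
    exact h4
  have hmem : ∀ k : ℕ, f (u k) ∈ posReals := by
    intro k
    have ht0 : (0 : ℝ) < 1 / ((k : ℝ) + 1) := by positivity
    have ht1 : 1 / ((k : ℝ) + 1) ≤ 1 := by
      rw [div_le_one (by positivity)]; linarith [Nat.cast_nonneg (α := ℝ) k]
    have habs : ‖u k‖ = 1 := by
      rw [hu]; simp [norm_mul, hr, Complex.norm_exp]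
    have hne : u k ≠ z := by
      rw [hu]
      intro hcontra
      exact exp_I_ne_one ht0 ht1 (mul_left_cancel₀ hr0 (hcontra.trans (mul_one z).symm))
    obtain ⟨x, hx0, hxeq⟩ := h (u k) habs hne
    have hcc : (starRingEnd ℂ) (u k) * (u k) = 1 := by
      rw [mul_comm, Complex.mul_conj]
      norm_cast
      rw [← Complex.sq_norm, habs]; norm_num
    constructor
    · show 0 ≤ (f (u k)).re
      have : f (u k) = (x : ℂ) := by
        rw [hf]; simp only
        rw [hxeq, ← mul_assoc, ← mul_pow, hcc, one_pow, one_mul]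
      rw [this]; simpa using hx0
    · show (f (u k)).im = 0
      have : f (u k) = (x : ℂ) := by
        rw [hf]; simp only
        rw [hxeq, ← mul_assoc, ← mul_pow, hcc, one_pow, one_mul]
      rw [this]; simp
  have hflim : Tendsto (fun k => f (u k)) atTop (nhds (f z)) :=
    (hcont.tendsto z).comp hulim
  have hfr : f z ∈ posReals :=
    posReals_closed.mem_of_tendsto hflim (Eventually.of_forall hmem)
  refine ⟨(f z).re, hfr.1, ?_⟩
  have hfr_eq : f z = ((f z).re : ℂ) := by
    apply Complex.ext <;> simp [hfr.2]
  have hcc : (starRingEnd ℂ) z * z = 1 := by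
    rw [mul_comm, Complex.mul_conj]
    norm_cast
    rw [← Complex.sq_norm, hr]; norm_num
  have hkey : z ^ m * f z = G.eval z := by
    rw [hf]; simp only
    rw [← mul_assoc, ← mul_pow, mul_comm z, hcc, one_pow, one_mul]
  rw [← hkey]
  exact congrArg (fun w => z ^ m * w) hfr_eq

lemma deriv_zero_of_circle_root {n : ℕ} {F : Polynomial ℂ}
    (hpos : ∀ z : ℂ, ‖z‖ = 1 → ∃ x : ℝ, 0 ≤ x ∧ F.eval z = z ^ n * x)
    {r : ℂ} (hr : ‖r‖ = 1) (hroot : F.eval r = 0) :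
    F.derivative.eval r = 0 := by
  have hr0 : r ≠ 0 := by intro h0; rw [h0] at hr; simp at hr
  set c : ℂ := ((starRingEnd ℂ) r) ^ n with hc
  have hc0 : c ≠ 0 := pow_ne_zero _ (by simpa using hr0)
  set g : ℝ → ℂ := fun t =>
    (c * Complex.exp (-(Complex.I * n * t))) * F.eval (r * Complex.exp (Complex.I * t)) with hg
  -- g maps into posReals (it equals the nonneg value x)
  have hcircle : ∀ t : ℝ, ‖r * Complex.exp (Complex.I * t)‖ = 1 := by
    intro t
    rw [norm_mul, hr, Complex.norm_exp]
    simp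
  have hgval : ∀ t : ℝ, ∃ x : ℝ, 0 ≤ x ∧ g t = (x : ℂ) := by
    intro t
    obtain ⟨x, hx0, hxeq⟩ := hpos _ (hcircle t)
    refine ⟨x, hx0, ?_⟩
    rw [hg]; simp only
    rw [hxeq]
    have key : c * Complex.exp (-(Complex.I * n * t)) * (r * Complex.exp (Complex.I * t)) ^ n
        = 1 := by
      rw [hc, mul_pow, ← Complex.exp_nat_mul]
      have h1 : ((starRingEnd ℂ) r) ^ n * r ^ n = 1 := by
        rw [← mul_pow, mul_comm, Complex.mul_conj]
        norm_cast
        rw [← Complex.sq_norm, hr]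
        norm_num
      calc ((starRingEnd ℂ) r) ^ n * Complex.exp (-(Complex.I * n * t)) *
            (r ^ n * Complex.exp ((n : ℂ) * (Complex.I * t)))
          = (((starRingEnd ℂ) r) ^ n * r ^ n) *
            (Complex.exp (-(Complex.I * n * t)) * Complex.exp ((n:ℂ) * (Complex.I * t))) := by
            ring
        _ = 1 := by
            rw [h1, ← Complex.exp_add, one_mul]
            norm_num
            exact Complex.exp_zero ▸ (by ring_nf)
    calc c * Complex.exp (-(Complex.I * n * t)) * ((r * Complex.exp (Complex.I * t)) ^ n * x)
        = (c * Complex.exp (-(Complex.I * n * t)) * (r * Complex.exp (Complex.I * t)) ^ n) * x := by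
          ring
      _ = (x : ℂ) := by rw [key, one_mul]
  -- derivative of g at 0
  have he : HasDerivAt (fun t : ℝ => r * Complex.exp (Complex.I * t)) (r * Complex.I) 0 := by
    have h1 : HasDerivAt (fun t : ℝ => Complex.I * (t : ℂ)) Complex.I 0 := by
      simpa using (Complex.ofRealCLM.hasDerivAt (x := (0:ℝ))).const_mul Complex.I
    have h2 := h1.cexp
    have h3 := h2.const_mul r
    refine h3.congr_deriv ?_
    simp
  have hg1 : HasDerivAt (fun t : ℝ => c * Complex.exp (-(Complex.I * n * t)))
      (c * (-(Complex.I * n))) 0 := by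
    have h1 : HasDerivAt (fun t : ℝ => -(Complex.I * n * (t : ℂ))) (-(Complex.I * n)) 0 := by
      exact HasDerivAt.neg (f := fun t : ℝ => Complex.I * n * (t : ℂ)) (by
        simpa using (Complex.ofRealCLM.hasDerivAt (x := (0:ℝ))).const_mul (Complex.I * n))
    have h2 := h1.cexp
    have h3 := h2.const_mul c
    refine h3.congr_deriv ?_
    simp
  have hg2 : HasDerivAt (fun t : ℝ => F.eval (r * Complex.exp (Complex.I * t)))
      (F.derivative.eval r * (r * Complex.I)) 0 := by
    have hf := F.hasDerivAt (r * Complex.exp (Complex.I * ((0:ℝ) : ℂ)))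
    have := (hf.hasFDerivAt.restrictScalars ℝ).comp_hasDerivAt 0 he
    refine this.congr_deriv ?_
    simp
    ring
  have hD : HasDerivAt g (c * F.derivative.eval r * r * Complex.I) 0 := by
    have := hg1.mul hg2
    refine this.congr_deriv ?_
    have h0 : F.eval (r * Complex.exp (Complex.I * ((0:ℝ):ℂ))) = 0 := by
      simpa using hroot
    rw [h0]
    simp
    ring
  set D : ℂ := c * F.derivative.eval r * r * Complex.I with hDdef
  -- real part has local min at 0
  have hre : HasDerivAt (fun t => (g t).re) D.re 0 :=
    (Complex.reCLM.hasFDerivAt.comp_hasDerivAt 0 hD)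
  have him : HasDerivAt (fun t => (g t).im) D.im 0 :=
    (Complex.imCLM.hasFDerivAt.comp_hasDerivAt 0 hD)
  have hg0 : g 0 = 0 := by
    rw [hg]; simp [hroot]
  have hDre : D.re = 0 := by
    have hmin : IsLocalMin (fun t => (g t).re) 0 := by
      apply Filter.Eventually.of_forall
      intro t
      obtain ⟨x, hx0, hxeq⟩ := hgval t
      simp only [hg0, hxeq]
      simpa using hx0
    have := hmin.deriv_eq_zero
    rw [hre.deriv] at this
    exact this
  have hDim : D.im = 0 := by
    have hconst : (fun t : ℝ => (g t).im) = fun _ => 0 := by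
      funext t
      obtain ⟨x, hx0, hxeq⟩ := hgval t
      rw [hxeq]; simp
    rw [hconst] at him
    exact him.unique (hasDerivAt_const 0 0)
  have hD0 : D = 0 := Complex.ext hDre hDim
  rw [hDdef] at hD0
  have : c * F.derivative.eval r * r = 0 := by
    have hI : Complex.I ≠ 0 := Complex.I_ne_zero
    exact (mul_eq_zero.mp hD0).resolve_right hI
  rcases mul_eq_zero.mp this with h | h
  · rcases mul_eq_zero.mp h with h' | h'
    · exact absurd h' hc0
    · exact h'
  · exact absurd h hr0
lemma circle_mul_conj {z : ℂ} (hz : ‖z‖ = 1) : z * (starRingEnd ℂ) z = 1 := by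
  rw [Complex.mul_conj]
  norm_cast
  rw [← Complex.sq_norm, hz]; norm_num

lemma circle_ne_zero {z : ℂ} (hz : ‖z‖ = 1) : z ≠ 0 := by
  intro h; rw [h] at hz; simp at hz

lemma self_inversive {n : ℕ} {F : Polynomial ℂ} (hdeg : F.natDegree ≤ 2 * n)
    (hpos : ∀ z : ℂ, ‖z‖ = 1 → ∃ x : ℝ, 0 ≤ x ∧ F.eval z = z ^ n * x) :
    F = Polynomial.reflect (2 * n) (F.map (starRingEnd ℂ)) := by
  apply eq_on_circle
  intro z hz
  have hz0 := circle_ne_zero hz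
  have hz1 := circle_mul_conj hz
  rw [eval_reflect_map_conj hdeg z hz0]
  have hcz0 : (starRingEnd ℂ) z ≠ 0 := by
    simpa using hz0
  have hinv : ((starRingEnd ℂ) z)⁻¹ = z := inv_eq_of_mul_eq_one_left hz1
  rw [hinv]
  obtain ⟨x, hx0, hxeq⟩ := hpos z hz
  rw [hxeq]
  rw [_root_.map_mul, _root_.map_pow, Complex.conj_ofReal]
  rw [show z ^ (2 * n) * (((starRingEnd ℂ) z) ^ n * (x : ℂ))
      = (z * (starRingEnd ℂ) z) ^ n * (z ^ n * (x : ℂ)) from by ring, hz1, one_pow, one_mul]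

lemma fejerRiesz : ∀ (n : ℕ) (F : Polynomial ℂ), F.natDegree ≤ 2 * n →
    (∀ z : ℂ, ‖z‖ = 1 → ∃ x : ℝ, 0 ≤ x ∧ F.eval z = z ^ n * x) →
    ∃ Q : Polynomial ℂ, Q.natDegree ≤ n ∧
      ∀ z : ℂ, ‖z‖ = 1 →
        F.eval z = z ^ n * (Q.eval z * (starRingEnd ℂ) (Q.eval z)) := by
  intro n
  induction n with
  | zero =>
    intro F hdeg hpos
    obtain ⟨x, hx0, hxeq⟩ := hpos 1 (by simp)
    have hF : F = Polynomial.C (F.coeff 0) :=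
      Polynomial.eq_C_of_natDegree_le_zero (by simpa using hdeg)
    have hc : F.coeff 0 = (x : ℂ) := by
      have h1 : F.eval 1 = F.coeff 0 := by rw [hF]; simp
      rw [h1] at hxeq
      simpa using hxeq
    refine ⟨Polynomial.C ((Real.sqrt x : ℝ) : ℂ), by simp, ?_⟩
    intro z hz
    rw [hF, hc]
    simp only [Polynomial.eval_C, pow_zero, one_mul, Complex.conj_ofReal]
    rw [← Complex.ofReal_mul, Real.mul_self_sqrt hx0]
  | succ n IH =>
    intro F hdeg hpos
    by_cases hF0 : F = 0
    · exact ⟨0, by simp, by intro z hz; simp [hF0]⟩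
    have hsym := self_inversive hdeg hpos
    have hcoeff : ∀ k : ℕ, k ≤ 2 * (n + 1) →
        F.coeff k = (starRingEnd ℂ) (F.coeff (2 * (n + 1) - k)) := by
      intro k hk
      conv_lhs => rw [hsym]
      rw [Polynomial.coeff_reflect, Polynomial.revAt_le hk, Polynomial.coeff_map]
    by_cases h0 : F.coeff 0 = 0
    · -- divide by X
      have htop : F.coeff (2 * (n + 1)) = 0 := by
        rw [hcoeff (2 * (n + 1)) le_rfl]
        simp [h0]
      have hdeg' : ∀ m : ℕ, 2 * n + 1 < m → F.coeff m = 0 := by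
        intro m hm
        rcases eq_or_lt_of_le (by omega : 2 * n + 2 ≤ m) with h | h
        · have h2 : 2 * (n + 1) = m := by omega
          rw [← h2]; exact htop
        · exact Polynomial.coeff_eq_zero_of_natDegree_lt (by omega)
      have hXF : Polynomial.X * F.divX = F := by
        have h := F.divX_mul_X_add
        rw [h0, _root_.map_zero, add_zero] at h
        rw [mul_comm]; exact h
      have hdeg₂ : F.divX.natDegree ≤ 2 * n := by
        rw [Polynomial.natDegree_le_iff_coeff_eq_zero]
        intro m hm
        rw [Polynomial.coeff_divX]
        exact hdeg' (m + 1) (by omega)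
      have hpos₂ : ∀ z : ℂ, ‖z‖ = 1 →
          ∃ x : ℝ, 0 ≤ x ∧ F.divX.eval z = z ^ n * x := by
        intro z hz
        obtain ⟨x, hx0, hxeq⟩ := hpos z hz
        refine ⟨x, hx0, ?_⟩
        apply mul_left_cancel₀ (circle_ne_zero hz)
        have h1 : z * F.divX.eval z = F.eval z := by
          conv_rhs => rw [← hXF]
          simp
        rw [h1, hxeq]; ring
      obtain ⟨Q, hQd, hQ⟩ := IH F.divX hdeg₂ hpos₂
      refine ⟨Q, le_trans hQd (by omega), ?_⟩
      intro z hz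
      conv_lhs => rw [← hXF]
      simp only [Polynomial.eval_mul, Polynomial.eval_X]
      rw [hQ z hz]; ring
    · -- F.coeff 0 ≠ 0 : there is a root, and natDegree F = 2n+2
      have htop : F.coeff (2 * (n + 1)) ≠ 0 := by
        rw [hcoeff (2 * (n + 1)) le_rfl]
        simpa using h0
      have hdegpos : 0 < F.degree := by
        rw [← Polynomial.natDegree_pos_iff_degree_pos]
        have := Polynomial.le_natDegree_of_ne_zero htop
        omega
      obtain ⟨r, hroot⟩ := Complex.exists_root hdegpos
      rw [Polynomial.IsRoot] at hroot
      have hr0 : r ≠ 0 := by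
        intro h
        rw [h, ← Polynomial.coeff_zero_eq_eval_zero] at hroot
        exact h0 hroot
      by_cases hr1 : ‖r‖ = 1
      · -- circle root: double root
        have hr1' := circle_mul_conj hr1
        have hder : F.derivative.eval r = 0 := deriv_zero_of_circle_root hpos hr1 hroot
        obtain ⟨F₂, hF₂⟩ := Polynomial.dvd_iff_isRoot.mpr hroot
        have hF₂r : F₂.eval r = 0 := by
          have hd := congrArg Polynomial.derivative hF₂
          rw [Polynomial.derivative_mul, Polynomial.derivative_X_sub_C] at hd
          have h2 := congrArg (Polynomial.eval r) hd
          simp only [Polynomial.eval_add, Polynomial.eval_mul, Polynomial.eval_one,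
            Polynomial.eval_sub, Polynomial.eval_X, Polynomial.eval_C, sub_self,
            zero_mul, add_zero, one_mul] at h2
          rw [hder] at h2
          exact h2.symm
        obtain ⟨F₁, hF₁⟩ := Polynomial.dvd_iff_isRoot.mpr hF₂r
        have hfac : F = (Polynomial.X - Polynomial.C r) ^ 2 * F₁ := by
          rw [hF₂, hF₁]; ring
        have hF₁0 : F₁ ≠ 0 := by
          intro h
          rw [h, mul_zero] at hfac
          exact hF0 hfac
        have hdeg₁ : F₁.natDegree ≤ 2 * n := by
          have hnd := congrArg Polynomial.natDegree hfac
          rw [Polynomial.natDegree_mul (pow_ne_zero _ (Polynomial.X_sub_C_ne_zero r)) hF₁0,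
            Polynomial.natDegree_pow, Polynomial.natDegree_X_sub_C] at hnd
          omega
        have hnegr : (-r : ℂ) ≠ 0 := neg_ne_zero.mpr hr0
        have hdegG₁ : (Polynomial.C (-r) * F₁).natDegree ≤ 2 * n := by
          rw [Polynomial.natDegree_C_mul hnegr]; exact hdeg₁
        have hposG₁ : ∀ z : ℂ, ‖z‖ = 1 →
            ∃ x : ℝ, 0 ≤ x ∧ (Polynomial.C (-r) * F₁).eval z = z ^ n * x := by
          apply pos_extend hr1
          intro z hz hzr
          obtain ⟨x, hx0, hxeq⟩ := hpos z hz
          refine ⟨x / Complex.normSq (z - r), div_nonneg hx0 (Complex.normSq_nonneg _), ?_⟩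
          have hz1 := circle_mul_conj hz
          have hw : z - r ≠ 0 := sub_ne_zero.mpr hzr
          have hwc : (starRingEnd ℂ) (z - r) ≠ 0 := by
            intro h
            apply hw
            have h2 := congrArg (starRingEnd ℂ) h
            simpa using h2
          have h1 : (z - r) ^ 2 * F₁.eval z = z ^ (n + 1) * x := by
            rw [← hxeq, hfac]
            simp
          have hw1 : (-r) * (z * (starRingEnd ℂ) (z - r)) = z - r := by
            rw [_root_.map_sub]
            linear_combination (-r) * hz1 + z * hr1'
          simp only [Polynomial.eval_mul, Polynomial.eval_C]
          rw [Complex.ofReal_div,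
            show ((Complex.normSq (z - r) : ℝ) : ℂ) = (z - r) * (starRingEnd ℂ) (z - r) from
              (Complex.mul_conj _).symm,
            mul_div_assoc' (z ^ n), eq_div_iff (mul_ne_zero hw hwc)]
          apply mul_left_cancel₀ hw
          linear_combination ((-r) * (starRingEnd ℂ) (z - r)) * h1 + (z ^ n * (x : ℂ)) * hw1
        obtain ⟨Q₁, hQ₁d, hQ₁⟩ := IH (Polynomial.C (-r) * F₁) hdegG₁ hposG₁
        refine ⟨(Polynomial.X - Polynomial.C r) * Q₁, ?_, ?_⟩
        · apply le_trans Polynomial.natDegree_mul_le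
          rw [Polynomial.natDegree_X_sub_C]
          omega
        · intro z hz
          have hz1 := circle_mul_conj hz
          have hG := hQ₁ z hz
          simp only [Polynomial.eval_mul, Polynomial.eval_C] at hG
          simp only [Polynomial.eval_mul, Polynomial.eval_sub, Polynomial.eval_X,
            Polynomial.eval_C, _root_.map_mul, _root_.map_sub]
          rw [hfac]
          simp only [Polynomial.eval_mul, Polynomial.eval_pow, Polynomial.eval_sub,
            Polynomial.eval_X, Polynomial.eval_C]
          have hw1 : (-r) * (z * ((starRingEnd ℂ) z - (starRingEnd ℂ) r)) = z - r := by
            linear_combination (-r) * hz1 + z * hr1'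
          linear_combination (z * (z - r) * ((starRingEnd ℂ) z - (starRingEnd ℂ) r)) * hG -
            ((z - r) * F₁.eval z) * hw1
      · -- off-circle root r; partner root rs = (conj r)⁻¹
        have hcr0 : (starRingEnd ℂ) r ≠ 0 := by simpa using hr0
        set rs : ℂ := ((starRingEnd ℂ) r)⁻¹ with hrs
        have hrs0 : rs ≠ 0 := inv_ne_zero hcr0
        have hrsc : rs * (starRingEnd ℂ) r = 1 := inv_mul_cancel₀ hcr0
        have habs_rs : ‖rs‖ = (‖r‖)⁻¹ := by
          rw [hrs, norm_inv, Complex.norm_conj]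
        have hrsr : rs ≠ r := by
          intro h
          apply hr1
          have h1 : r * (starRingEnd ℂ) r = 1 := by rw [h] at hrsc; exact hrsc
          rw [Complex.mul_conj] at h1
          have h2 : Complex.normSq r = 1 := by exact_mod_cast h1
          rw [← Complex.sq_norm] at h2
          nlinarith [norm_nonneg r]
        have hroot2 : F.eval rs = 0 := by
          conv_lhs => rw [hsym]
          rw [eval_reflect_map_conj hdeg rs hrs0]
          have h1 : ((starRingEnd ℂ) rs)⁻¹ = r := by
            rw [hrs, map_inv₀, Complex.conj_conj, inv_inv]
          rw [h1, hroot, _root_.map_zero, mul_zero]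
        have hd1 := Polynomial.dvd_iff_isRoot.mpr (by rwa [Polynomial.IsRoot] : F.IsRoot r)
        have hd2 := Polynomial.dvd_iff_isRoot.mpr (by rwa [Polynomial.IsRoot] : F.IsRoot rs)
        have hcop : IsCoprime (Polynomial.X - Polynomial.C r)
            (Polynomial.X - Polynomial.C rs) := by
          refine ⟨-Polynomial.C ((r - rs)⁻¹), Polynomial.C ((r - rs)⁻¹), ?_⟩
          have hne : r - rs ≠ 0 := sub_ne_zero.mpr (fun h => hrsr h.symm)
          have h2 : -Polynomial.C ((r - rs)⁻¹) * (Polynomial.X - Polynomial.C r) +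
              Polynomial.C ((r - rs)⁻¹) * (Polynomial.X - Polynomial.C rs)
              = Polynomial.C ((r - rs)⁻¹) * (Polynomial.C r - Polynomial.C rs) := by ring
          rw [h2, ← Polynomial.C_sub, ← Polynomial.C_mul, inv_mul_cancel₀ hne,
            Polynomial.C_1]
        obtain ⟨F₁, hfac⟩ := hcop.mul_dvd hd1 hd2
        have hF₁0 : F₁ ≠ 0 := by
          intro h
          rw [h, mul_zero] at hfac
          exact hF0 hfac
        have hdeg₁ : F₁.natDegree ≤ 2 * n := by
          have hnd := congrArg Polynomial.natDegree hfac
          rw [Polynomial.natDegree_mul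
            (mul_ne_zero (Polynomial.X_sub_C_ne_zero r) (Polynomial.X_sub_C_ne_zero rs)) hF₁0,
            Polynomial.natDegree_mul (Polynomial.X_sub_C_ne_zero r)
              (Polynomial.X_sub_C_ne_zero rs),
            Polynomial.natDegree_X_sub_C, Polynomial.natDegree_X_sub_C] at hnd
          omega
        have hnegr : (-r : ℂ) ≠ 0 := neg_ne_zero.mpr hr0
        have hdegG₁ : (Polynomial.C (-r) * F₁).natDegree ≤ 2 * n := by
          rw [Polynomial.natDegree_C_mul hnegr]; exact hdeg₁
        have hposG₁ : ∀ z : ℂ, ‖z‖ = 1 →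
            ∃ x : ℝ, 0 ≤ x ∧ (Polynomial.C (-r) * F₁).eval z = z ^ n * x := by
          intro z hz
          obtain ⟨x, hx0, hxeq⟩ := hpos z hz
          have hz1 := circle_mul_conj hz
          have hzr : z ≠ r := by intro h; rw [← h] at hr1; exact hr1 hz
          have hzrs : z ≠ rs := by
            intro h
            apply hr1
            have h2 : (‖r‖)⁻¹ = 1 := by rw [← habs_rs, ← h]; exact hz
            exact inv_eq_one.mp h2
          have hw : z - r ≠ 0 := sub_ne_zero.mpr hzr
          have hwc : (starRingEnd ℂ) (z - r) ≠ 0 := by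
            intro h
            apply hw
            have h2 := congrArg (starRingEnd ℂ) h
            simpa using h2
          have hws : z - rs ≠ 0 := sub_ne_zero.mpr hzrs
          refine ⟨Complex.normSq r * x / Complex.normSq (z - r),
            div_nonneg (mul_nonneg (Complex.normSq_nonneg _) hx0) (Complex.normSq_nonneg _), ?_⟩
          have h1 : (z - r) * (z - rs) * F₁.eval z = z ^ (n + 1) * x := by
            rw [← hxeq, hfac]
            simp
          have hkey : (-r) * (z * (starRingEnd ℂ) (z - r))
              = (z - rs) * (r * (starRingEnd ℂ) r) := by
            rw [_root_.map_sub]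
            linear_combination (-r) * hz1 + r * hrsc
          simp only [Polynomial.eval_mul, Polynomial.eval_C]
          rw [Complex.ofReal_div, Complex.ofReal_mul,
            show ((Complex.normSq (z - r) : ℝ) : ℂ) = (z - r) * (starRingEnd ℂ) (z - r) from
              (Complex.mul_conj _).symm,
            show ((Complex.normSq r : ℝ) : ℂ) = r * (starRingEnd ℂ) r from
              (Complex.mul_conj _).symm,
            mul_div_assoc' (z ^ n), eq_div_iff (mul_ne_zero hw hwc)]
          apply mul_left_cancel₀ hws
          linear_combination ((-r) * (starRingEnd ℂ) (z - r)) * h1 + (z ^ n * (x : ℂ)) * hkey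
        obtain ⟨Q₁, hQ₁d, hQ₁⟩ := IH (Polynomial.C (-r) * F₁) hdegG₁ hposG₁
        set a : ℝ := (‖r‖)⁻¹ with ha
        have ha0 : a ≠ 0 := inv_ne_zero (by simpa using hr0)
        have haa : ((a : ℂ)) * ((a : ℂ)) * (r * (starRingEnd ℂ) r) = 1 := by
          rw [Complex.mul_conj, ← Complex.ofReal_mul, ← Complex.ofReal_mul]
          norm_cast
          rw [ha, ← Complex.sq_norm]
          have habs0 : ‖r‖ ≠ 0 := by simpa using hr0
          field_simp
        refine ⟨Polynomial.C (a : ℂ) * ((Polynomial.X - Polynomial.C r) * Q₁), ?_, ?_⟩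
        · rw [Polynomial.natDegree_C_mul (by exact_mod_cast ha0 : ((a : ℂ)) ≠ 0)]
          apply le_trans Polynomial.natDegree_mul_le
          rw [Polynomial.natDegree_X_sub_C]
          omega
        · intro z hz
          have hz1 := circle_mul_conj hz
          have hG := hQ₁ z hz
          simp only [Polynomial.eval_mul, Polynomial.eval_C] at hG
          simp only [Polynomial.eval_mul, Polynomial.eval_sub, Polynomial.eval_X,
            Polynomial.eval_C, _root_.map_mul, _root_.map_sub, Complex.conj_ofReal]
          rw [hfac]
          simp only [Polynomial.eval_mul, Polynomial.eval_sub, Polynomial.eval_X,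
            Polynomial.eval_C]
          have hkey : (-r) * (z * ((starRingEnd ℂ) z - (starRingEnd ℂ) r))
              = (z - rs) * (r * (starRingEnd ℂ) r) := by
            linear_combination (-r) * hz1 + r * hrsc
          linear_combination ((a:ℂ) * (a:ℂ) * z * (z - r) *
              ((starRingEnd ℂ) z - (starRingEnd ℂ) r)) * hG -
            ((a:ℂ) * (a:ℂ) * (z - r) * F₁.eval z) * hkey -
            ((z - r) * (z - rs) * F₁.eval z) * haa

end Aux

section Mat
-- auxiliary blocks
def blk01 (N : ℕ) (W : Matrix (Fin 2 × Fin N) (Fin 2 × Fin N) ℂ) :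
    Matrix (Fin N) (Fin N) ℂ :=
  Matrix.of fun i j => W (0, i) (1, j)

def blk11 (N : ℕ) (W : Matrix (Fin 2 × Fin N) (Fin 2 × Fin N) ℂ) :
    Matrix (Fin N) (Fin N) ℂ :=
  Matrix.of fun i j => W (1, i) (1, j)

lemma block00_mul (N : ℕ) (M W : Matrix (Fin 2 × Fin N) (Fin 2 × Fin N) ℂ) :
    block00 N (M * W) = block00 N M * block00 N W + blk01 N M * block10 N W := by
  ext i j
  simp only [block00, blk01, block10, Matrix.of_apply, Matrix.mul_apply, Matrix.add_apply,
    Fintype.sum_prod_type, Fin.sum_univ_two]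

lemma block10_mul (N : ℕ) (M W : Matrix (Fin 2 × Fin N) (Fin 2 × Fin N) ℂ) :
    block10 N (M * W) = block10 N M * block00 N W + blk11 N M * block10 N W := by
  ext i j
  simp only [block00, blk11, block10, Matrix.of_apply, Matrix.mul_apply, Matrix.add_apply,
    Fintype.sum_prod_type, Fin.sum_univ_two]

lemma blocks_gqspR (N : ℕ) (θ φ lam : ℝ) :
    block00 N (gqspR N θ φ lam)
        = (Complex.exp (Complex.I * ((lam : ℂ) + (φ : ℂ))) * (Real.cos θ : ℂ)) • 1 ∧
      blk01 N (gqspR N θ φ lam) = (Complex.exp (Complex.I * (φ : ℂ)) * (Real.sin θ : ℂ)) • 1 ∧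
      block10 N (gqspR N θ φ lam) = (Complex.exp (Complex.I * (lam : ℂ)) * (Real.sin θ : ℂ)) • 1 ∧
      blk11 N (gqspR N θ φ lam) = (-(Real.cos θ : ℂ)) • 1 := by
  refine ⟨?_, ?_, ?_, ?_⟩ <;> ext i j <;>
    simp [gqspR, block00, blk01, block10, blk11, Matrix.kroneckerMap_apply, Matrix.smul_apply,
      Matrix.one_apply, mul_ite, mul_one, mul_zero]

lemma blocks_gqspA (N : ℕ) (U : Matrix (Fin N) (Fin N) ℂ) :
    block00 N (gqspA N U) = U ∧ blk01 N (gqspA N U) = 0 ∧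
      block10 N (gqspA N U) = 0 ∧ blk11 N (gqspA N U) = 1 := by
  refine ⟨?_, ?_, ?_, ?_⟩ <;> ext i j <;>
    simp [gqspA, block00, blk01, block10, blk11, Matrix.kroneckerMap_apply]


lemma blk01_mul (N : ℕ) (M W : Matrix (Fin 2 × Fin N) (Fin 2 × Fin N) ℂ) :
    blk01 N (M * W) = block00 N M * blk01 N W + blk01 N M * blk11 N W := by
  ext i j
  simp only [block00, blk01, blk11, Matrix.of_apply, Matrix.mul_apply, Matrix.add_apply,
    Fintype.sum_prod_type, Fin.sum_univ_two]

lemma blk11_mul (N : ℕ) (M W : Matrix (Fin 2 × Fin N) (Fin 2 × Fin N) ℂ) :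
    blk11 N (M * W) = block10 N M * blk01 N W + blk11 N M * blk11 N W := by
  ext i j
  simp only [block10, blk01, blk11, Matrix.of_apply, Matrix.mul_apply, Matrix.add_apply,
    Fintype.sum_prod_type, Fin.sum_univ_two]

noncomputable def gstep (θ φ : ℝ) (pq : Polynomial ℂ × Polynomial ℂ) :
    Polynomial ℂ × Polynomial ℂ :=
  (Polynomial.C (Complex.exp (Complex.I * (φ : ℂ)) * (Real.cos θ : ℂ)) * (Polynomial.X * pq.1)
      + Polynomial.C (Complex.exp (Complex.I * (φ : ℂ)) * (Real.sin θ : ℂ)) * pq.2,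
    Polynomial.C ((Real.sin θ : ℂ)) * (Polynomial.X * pq.1)
      - Polynomial.C ((Real.cos θ : ℂ)) * pq.2)

noncomputable def ginit (θ φ lam : ℝ) : Polynomial ℂ × Polynomial ℂ :=
  (Polynomial.C (Complex.exp (Complex.I * ((lam : ℂ) + (φ : ℂ))) * (Real.cos θ : ℂ)),
    Polynomial.C (Complex.exp (Complex.I * (lam : ℂ)) * (Real.sin θ : ℂ)))

lemma col_init (N : ℕ) (U : Matrix (Fin N) (Fin N) ℂ) (θ φ lam : ℝ) :
    block00 N (gqspR N θ φ lam) = Polynomial.aeval U (ginit θ φ lam).1 ∧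
      block10 N (gqspR N θ φ lam) = Polynomial.aeval U (ginit θ φ lam).2 := by
  obtain ⟨h1, _, h3, _⟩ := blocks_gqspR N θ φ lam
  constructor
  · rw [h1, ginit, Polynomial.aeval_C, Algebra.algebraMap_eq_smul_one]
  · rw [h3, ginit, Polynomial.aeval_C, Algebra.algebraMap_eq_smul_one]

lemma col_step (N : ℕ) (U : Matrix (Fin N) (Fin N) ℂ)
    (W : Matrix (Fin 2 × Fin N) (Fin 2 × Fin N) ℂ) (p q : Polynomial ℂ) (θ φ : ℝ)
    (h1 : block00 N W = Polynomial.aeval U p) (h2 : block10 N W = Polynomial.aeval U q) :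
    block00 N (gqspR N θ φ 0 * gqspA N U * W) = Polynomial.aeval U (gstep θ φ (p, q)).1 ∧
      block10 N (gqspR N θ φ 0 * gqspA N U * W) = Polynomial.aeval U (gstep θ φ (p, q)).2 := by
  obtain ⟨hR1, hR2, hR3, hR4⟩ := blocks_gqspR N θ φ 0
  obtain ⟨hA1, hA2, hA3, hA4⟩ := blocks_gqspA N U
  have hz : Complex.exp (Complex.I * (((0:ℝ) : ℂ) + (φ : ℂ))) * (Real.cos θ : ℂ)
      = Complex.exp (Complex.I * (φ : ℂ)) * (Real.cos θ : ℂ) := by norm_num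
  have hz2 : Complex.exp (Complex.I * ((0:ℝ) : ℂ)) * (Real.sin θ : ℂ) = (Real.sin θ : ℂ) := by
    norm_num [Complex.exp_zero]
  have hRA1 : block00 N (gqspR N θ φ 0 * gqspA N U)
      = (Complex.exp (Complex.I * (φ : ℂ)) * (Real.cos θ : ℂ)) • U := by
    rw [block00_mul, hR1, hA1, hR2, hA3, mul_zero, add_zero, smul_mul_assoc, one_mul, hz]
  have hRA2 : blk01 N (gqspR N θ φ 0 * gqspA N U)
      = (Complex.exp (Complex.I * (φ : ℂ)) * (Real.sin θ : ℂ)) • 1 := by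
    rw [blk01_mul, hR1, hA2, hR2, hA4, mul_zero, zero_add, mul_one]
  have hRA3 : block10 N (gqspR N θ φ 0 * gqspA N U) = ((Real.sin θ : ℂ)) • U := by
    rw [block10_mul, hR3, hA1, hR4, hA3, mul_zero, add_zero, smul_mul_assoc, one_mul, hz2]
  have hRA4 : blk11 N (gqspR N θ φ 0 * gqspA N U) = (-(Real.cos θ : ℂ)) • 1 := by
    rw [blk11_mul, hR3, hA2, hR4, hA4, mul_zero, zero_add, mul_one]
  constructor
  · rw [block00_mul, hRA1, hRA2, h1, h2, gstep]
    simp only [map_add, _root_.map_mul, Polynomial.aeval_C, Polynomial.aeval_X,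
      Algebra.algebraMap_eq_smul_one, smul_mul_assoc, one_mul, smul_smul]
  · rw [block10_mul, hRA3, hRA4, h1, h2, gstep]
    simp only [map_sub, map_add, map_neg, _root_.map_mul, Polynomial.aeval_C,
      Polynomial.aeval_X, Algebra.algebraMap_eq_smul_one, smul_mul_assoc, one_mul, smul_smul,
      neg_smul, neg_mul, sub_eq_add_neg, neg_neg]

set_option maxHeartbeats 800000 in
lemma col_list (N : ℕ) (U : Matrix (Fin N) (Fin N) ℂ) (l : List (ℝ × ℝ))
    (W : Matrix (Fin 2 × Fin N) (Fin 2 × Fin N) ℂ) (p q : Polynomial ℂ)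
    (h1 : block00 N W = Polynomial.aeval U p) (h2 : block10 N W = Polynomial.aeval U q) :
    block00 N ((l.map fun a => gqspR N a.1 a.2 0 * gqspA N U).prod * W)
        = Polynomial.aeval U ((l.foldr (fun a pq => gstep a.1 a.2 pq) (p, q)).1) ∧
      block10 N ((l.map fun a => gqspR N a.1 a.2 0 * gqspA N U).prod * W)
        = Polynomial.aeval U ((l.foldr (fun a pq => gstep a.1 a.2 pq) (p, q)).2) := by
  induction l with
  | nil => simpa using ⟨h1, h2⟩
  | cons a l ih =>
    simp only [List.map_cons, List.prod_cons, List.foldr_cons]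
    rw [mul_assoc]
    exact col_step N U _ _ _ a.1 a.2 ih.1 ih.2

lemma circuit_block00 (N d : ℕ) (U : Matrix (Fin N) (Fin N) ℂ) (θ φ : Fin (d + 1) → ℝ)
    (lam : ℝ) :
    block00 N (gqspCircuit N d U θ φ lam)
      = Polynomial.aeval U
        (((List.ofFn fun j : Fin d => (θ j.succ, φ j.succ)).foldr
          (fun a pq => gstep a.1 a.2 pq) (ginit (θ 0) (φ 0) lam)).1) := by
  have hmap : (List.ofFn fun j : Fin d => (θ j.succ, φ j.succ)).map
      (fun a => gqspR N a.1 a.2 0 * gqspA N U)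
      = List.ofFn fun j : Fin d => gqspR N (θ j.succ) (φ j.succ) 0 * gqspA N U := by
    rw [List.map_ofFn]; rfl
  rw [gqspCircuit, ← hmap]
  obtain ⟨hi1, hi2⟩ := col_init N U (θ 0) (φ 0) lam
  exact (col_list N U _ _ _ _ hi1 hi2).1

end Mat

section Aux2
open Polynomial Complex

lemma exists_cs {a b : ℝ} (ha : 0 ≤ a) (hb : 0 ≤ b) (h : a ^ 2 + b ^ 2 = 1) :
    ∃ θ : ℝ, Real.cos θ = a ∧ Real.sin θ = b := by
  refine ⟨Real.arccos a, Real.cos_arccos (by nlinarith) (by nlinarith), ?_⟩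
  rw [Real.sin_arccos, show 1 - a ^ 2 = b ^ 2 by nlinarith]
  exact Real.sqrt_sq hb

lemma exists_phi {w : ℂ} (hw : ‖w‖ = 1) :
    ∃ φ : ℝ, Complex.exp (Complex.I * (φ : ℂ)) = w := by
  refine ⟨w.arg, ?_⟩
  have h := Complex.norm_mul_exp_arg_mul_I w
  rw [hw, Complex.ofReal_one, one_mul] at h
  rw [mul_comm]
  exact h

lemma coeff_top_mul {p r : Polynomial ℂ} {D : ℕ} (hp : p.natDegree ≤ D) (hr : r.natDegree ≤ D) :
    (p * r).coeff (D + D) = p.coeff D * r.coeff D := by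
  rw [Polynomial.coeff_mul]
  apply Finset.sum_eq_single_of_mem (D, D) (Finset.HasAntidiagonal.mem_antidiagonal.mpr rfl)
  intro b hb hbne
  rw [Finset.HasAntidiagonal.mem_antidiagonal] at hb
  have hb1 : b.1 ≠ D := by
    intro h
    exact hbne (Prod.ext h (by omega))
  rcases (by omega : D < b.1 ∨ D < b.2) with h | h
  · rw [Polynomial.coeff_eq_zero_of_natDegree_lt (lt_of_le_of_lt hp h), zero_mul]
  · rw [Polynomial.coeff_eq_zero_of_natDegree_lt (lt_of_le_of_lt hr h), mul_zero]

lemma orth_coeff {d : ℕ} {p q : Polynomial ℂ} (hp : p.natDegree ≤ d + 1)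
    (hq : q.natDegree ≤ d + 1)
    (h1 : ∀ z : ℂ, ‖z‖ = 1 →
      p.eval z * (starRingEnd ℂ) (p.eval z) + q.eval z * (starRingEnd ℂ) (q.eval z) = 1) :
    p.coeff (d + 1) * (starRingEnd ℂ) (p.coeff 0)
      + q.coeff (d + 1) * (starRingEnd ℂ) (q.coeff 0) = 0 := by
  set D := d + 1 with hD
  have hpoly : p * Polynomial.reflect D (p.map (starRingEnd ℂ))
      + q * Polynomial.reflect D (q.map (starRingEnd ℂ)) = Polynomial.X ^ D := by
    apply eq_on_circle
    intro z hz
    have hz0 := circle_ne_zero hz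
    have hz1 := circle_mul_conj hz
    have hinv : ((starRingEnd ℂ) z)⁻¹ = z := inv_eq_of_mul_eq_one_left hz1
    rw [Polynomial.eval_add, Polynomial.eval_mul, Polynomial.eval_mul,
      eval_reflect_map_conj hp z hz0, eval_reflect_map_conj hq z hz0, hinv,
      Polynomial.eval_pow, Polynomial.eval_X]
    linear_combination (z ^ D) * (h1 z hz)
  have hc := congrArg (fun f => Polynomial.coeff f (D + D)) hpoly
  simp only [Polynomial.coeff_add] at hc
  have hrp : (Polynomial.reflect D (p.map (starRingEnd ℂ))).natDegree ≤ D :=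
    natDegree_reflect_le (by
      rcases eq_or_ne p 0 with rfl | hp0
      · simp
      · rw [Polynomial.natDegree_map]; exact hp)
  have hrq : (Polynomial.reflect D (q.map (starRingEnd ℂ))).natDegree ≤ D :=
    natDegree_reflect_le (by
      rcases eq_or_ne q 0 with rfl | hq0
      · simp
      · rw [Polynomial.natDegree_map]; exact hq)
  rw [coeff_top_mul hp hrp, coeff_top_mul hq hrq] at hc
  rw [Polynomial.coeff_reflect, Polynomial.revAt_le (le_refl D), Polynomial.coeff_map,
    Polynomial.coeff_reflect, Polynomial.revAt_le (le_refl D), Polynomial.coeff_map,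
    Nat.sub_self] at hc
  rw [Polynomial.coeff_X_pow, if_neg (by omega : ¬ D + D = D)] at hc
  exact hc


lemma tab_helper (x y u v : ℂ)
    (horth : u * (starRingEnd ℂ) x + v * (starRingEnd ℂ) y = 0) :
    ∃ (t : ℂ) (a b : ℝ), ‖t‖ = 1 ∧ 0 ≤ a ∧ 0 ≤ b ∧ a ^ 2 + b ^ 2 = 1 ∧
      t * (a : ℂ) * x + (b : ℂ) * y = 0 ∧ t * (b : ℂ) * u = (a : ℂ) * v := by
  by_cases hu : u = 0
  · by_cases hv : v = 0
    · -- u = v = 0 : only first condition matters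
      by_cases hx : x = 0
      · exact ⟨1, 1, 0, by simp, by norm_num, le_refl 0, by norm_num,
          by simp [hx], by simp [hu, hv]⟩
      · by_cases hy : y = 0
        · exact ⟨1, 0, 1, by simp, le_refl 0, by norm_num, by norm_num,
            by simp [hy], by simp [hu, hv]⟩
        · set ax : ℝ := ‖x‖ with hax
          set ay : ℝ := ‖y‖ with hay
          have hax0 : 0 < ax := by simpa [hax] using (norm_pos_iff.mpr hx)
          have hay0 : 0 < ay := by simpa [hay] using (norm_pos_iff.mpr hy)
          set R : ℝ := Real.sqrt (ax ^ 2 + ay ^ 2) with hR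
          have hR0 : 0 < R := Real.sqrt_pos.mpr (by positivity)
          have hRsq : R ^ 2 = ax ^ 2 + ay ^ 2 := Real.sq_sqrt (by positivity)
          refine ⟨-(ax : ℂ) * y / ((ay : ℂ) * x), ay / R, ax / R, ?_, by positivity,
            by positivity, ?_, ?_, by simp [hu, hv]⟩
          · rw [norm_div, norm_mul, norm_mul, norm_neg]
            simp only [Complex.norm_real, Real.norm_eq_abs, abs_of_pos hax0, abs_of_pos hay0, ← hax, ← hay]
            field_simp
          · field_simp
            linarith [hRsq]
          · have hxne : (x : ℂ) ≠ 0 := hx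
            have hayC : ((ay : ℝ) : ℂ) ≠ 0 := by exact_mod_cast hay0.ne'
            have hRC : ((R : ℝ) : ℂ) ≠ 0 := by exact_mod_cast hR0.ne'
            push_cast
            field_simp
            ring
    · -- u = 0, v ≠ 0 : y = 0 forced
      have hy : y = 0 := by
        rw [hu, zero_mul, zero_add, mul_eq_zero] at horth
        rcases horth with h | h
        · exact absurd h hv
        · simpa using h
      exact ⟨1, 0, 1, by simp, le_refl 0, by norm_num, by norm_num, by simp [hy],
        by simp [hu]⟩
  · by_cases hv : v = 0
    · -- u ≠ 0, v = 0 : x = 0 forced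
      have hx : x = 0 := by
        rw [hv, zero_mul, add_zero, mul_eq_zero] at horth
        rcases horth with h | h
        · exact absurd h hu
        · simpa using h
      exact ⟨1, 1, 0, by simp, by norm_num, le_refl 0, by norm_num, by simp [hx],
        by simp [hv]⟩
    · -- u ≠ 0, v ≠ 0
      set au : ℝ := ‖u‖ with hau
      set av : ℝ := ‖v‖ with hav
      have hau0 : 0 < au := by simpa [hau] using (norm_pos_iff.mpr hu)
      have hav0 : 0 < av := by simpa [hav] using (norm_pos_iff.mpr hv)
      set R : ℝ := Real.sqrt (au ^ 2 + av ^ 2) with hR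
      have hR0 : 0 < R := Real.sqrt_pos.mpr (by positivity)
      have hRsq : R ^ 2 = au ^ 2 + av ^ 2 := Real.sq_sqrt (by positivity)
      have hauC : ((au : ℝ) : ℂ) ≠ 0 := by exact_mod_cast hau0.ne'
      have havC : ((av : ℝ) : ℂ) ≠ 0 := by exact_mod_cast hav0.ne'
      have hRC : ((R : ℝ) : ℂ) ≠ 0 := by exact_mod_cast hR0.ne'
      have horth' : (starRingEnd ℂ) u * x + (starRingEnd ℂ) v * y = 0 := by
        have h := congrArg (starRingEnd ℂ) horth
        simpa [_root_.map_add, _root_.map_mul] using h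
      have huu : ((au : ℝ) : ℂ) ^ 2 = u * (starRingEnd ℂ) u := by
        rw [Complex.mul_conj]
        norm_cast
        rw [hau]
        exact Complex.sq_norm u
      have hvv : ((av : ℝ) : ℂ) ^ 2 = v * (starRingEnd ℂ) v := by
        rw [Complex.mul_conj]
        norm_cast
        rw [hav]
        exact Complex.sq_norm v
      refine ⟨(au : ℂ) * v / ((av : ℂ) * u), au / R, av / R, ?_, by positivity, by positivity,
        ?_, ?_, ?_⟩
      · rw [norm_div, norm_mul, norm_mul]
        simp only [Complex.norm_real, Real.norm_eq_abs, abs_of_pos hau0, abs_of_pos hav0, ← hau, ← hav]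
        field_simp
      · field_simp
        linarith [hRsq]
      · push_cast
        field_simp
        -- reduce to the orthogonality relation
        linear_combination (u * v) * horth' + (v * x) * huu + (u * y) * hvv
      · push_cast
        field_simp


lemma gqsp_exists : ∀ (d : ℕ) (p q : Polynomial ℂ), p.natDegree ≤ d → q.natDegree ≤ d →
    (∀ z : ℂ, ‖z‖ = 1 →
      p.eval z * (starRingEnd ℂ) (p.eval z) + q.eval z * (starRingEnd ℂ) (q.eval z) = 1) →
    ∃ (w : Fin d → ℝ × ℝ) (θ0 φ0 lam : ℝ),
      (List.ofFn w).foldr (fun a pq => gstep a.1 a.2 pq) (ginit θ0 φ0 lam) = (p, q) := by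
  intro d
  induction d with
  | zero =>
    intro p q hp hq h1
    have hp' : p = Polynomial.C (p.coeff 0) := Polynomial.eq_C_of_natDegree_le_zero hp
    have hq' : q = Polynomial.C (q.coeff 0) := Polynomial.eq_C_of_natDegree_le_zero hq
    set p0 := p.coeff 0 with hp0
    set q0 := q.coeff 0 with hq0
    have h11 := h1 1 (by simp)
    rw [hp', hq'] at h11
    simp only [Polynomial.eval_C] at h11
    rw [Complex.mul_conj, Complex.mul_conj] at h11
    have hns : Complex.normSq p0 + Complex.normSq q0 = 1 := by exact_mod_cast h11
    have hsq : ‖p0‖ ^ 2 + ‖q0‖ ^ 2 = 1 := by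
      rw [Complex.sq_norm, Complex.sq_norm]; exact hns
    obtain ⟨θ0, hcos, hsin⟩ := exists_cs (norm_nonneg p0) (norm_nonneg q0) hsq
    refine ⟨fun j => j.elim0, θ0, p0.arg - q0.arg, q0.arg, ?_⟩
    rw [List.ofFn_zero, List.foldr_nil, ginit]
    have hA : Complex.exp (Complex.I * ((q0.arg : ℂ) + ((p0.arg - q0.arg : ℝ) : ℂ)))
        * ((Real.cos θ0 : ℝ) : ℂ) = p0 := by
      rw [hcos, show ((q0.arg : ℂ) + ((p0.arg - q0.arg : ℝ) : ℂ)) = ((p0.arg : ℝ) : ℂ) from by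
        push_cast; ring]
      rw [mul_comm (Complex.I), mul_comm]
      exact Complex.norm_mul_exp_arg_mul_I p0
    have hB : Complex.exp (Complex.I * (q0.arg : ℂ)) * ((Real.sin θ0 : ℝ) : ℂ) = q0 := by
      rw [hsin, mul_comm (Complex.I), mul_comm]
      exact Complex.norm_mul_exp_arg_mul_I q0
    rw [hA, hB, ← hp', ← hq']
  | succ d IH =>
    intro p q hp hq h1
    have horth := orth_coeff hp hq h1
    obtain ⟨t, a, b, habs_t, ha, hb, hab, cond1, cond2⟩ :=
      tab_helper (p.coeff 0) (q.coeff 0) (p.coeff (d + 1)) (q.coeff (d + 1)) horth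
    obtain ⟨θ, hcos, hsin⟩ := exists_cs ha hb hab
    obtain ⟨φ, hphi⟩ := exists_phi (show ‖(starRingEnd ℂ) t‖ = 1 from by
      rw [Complex.norm_conj]; exact habs_t)
    set e : ℂ := Complex.exp (Complex.I * (φ : ℂ)) with he
    have hconj_e : (starRingEnd ℂ) e = t := by
      rw [hphi, Complex.conj_conj]
    have habs_e : ‖e‖ = 1 := by
      rw [he, Complex.norm_exp]
      simp
    have hee : e * (starRingEnd ℂ) e = 1 := circle_mul_conj habs_e
    set c : ℂ := ((Real.cos θ : ℝ) : ℂ) with hc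
    set s : ℂ := ((Real.sin θ : ℝ) : ℂ) with hs
    have hcs : c * c + s * s = 1 := by
      rw [hc, hs]
      norm_cast
      nlinarith [Real.sin_sq_add_cos_sq θ]
    have cond1' : (starRingEnd ℂ) e * c * p.coeff 0 + s * q.coeff 0 = 0 := by
      rw [hconj_e, hc, hs, hcos, hsin]; exact cond1
    have cond2' : (starRingEnd ℂ) e * s * p.coeff (d + 1) = c * q.coeff (d + 1) := by
      rw [hconj_e, hc, hs, hcos, hsin]; exact cond2
    set A' : Polynomial ℂ := Polynomial.C ((starRingEnd ℂ) e * c) * p + Polynomial.C s * q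
      with hA'
    have hA0 : A'.coeff 0 = 0 := by
      rw [hA', Polynomial.coeff_add, Polynomial.coeff_C_mul, Polynomial.coeff_C_mul]
      exact cond1'
    set p' : Polynomial ℂ := A'.divX with hp'def
    have hXp' : Polynomial.X * p' = A' := by
      have h := A'.divX_mul_X_add
      rw [hA0, Polynomial.C_0, add_zero] at h
      rw [hp'def, mul_comm]
      exact h
    set q' : Polynomial ℂ := Polynomial.C ((starRingEnd ℂ) e * s) * p - Polynomial.C c * q
      with hq'def
    have hp'deg : p'.natDegree ≤ d := by
      rw [Polynomial.natDegree_le_iff_coeff_eq_zero]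
      intro m hm
      rw [hp'def, Polynomial.coeff_divX, hA', Polynomial.coeff_add, Polynomial.coeff_C_mul,
        Polynomial.coeff_C_mul, Polynomial.coeff_eq_zero_of_natDegree_lt (by omega :
          p.natDegree < m + 1), Polynomial.coeff_eq_zero_of_natDegree_lt (by omega :
          q.natDegree < m + 1), mul_zero, mul_zero, add_zero]
    have hq'deg : q'.natDegree ≤ d := by
      rw [Polynomial.natDegree_le_iff_coeff_eq_zero]
      intro m hm
      rw [hq'def, Polynomial.coeff_sub, Polynomial.coeff_C_mul, Polynomial.coeff_C_mul]
      rcases eq_or_lt_of_le (by omega : d + 1 ≤ m) with hmeq | hmlt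
      · rw [← hmeq, cond2', sub_self]
      · rw [Polynomial.coeff_eq_zero_of_natDegree_lt (by omega : p.natDegree < m),
          Polynomial.coeff_eq_zero_of_natDegree_lt (by omega : q.natDegree < m),
          mul_zero, mul_zero, sub_self]
    have hnorm' : ∀ z : ℂ, ‖z‖ = 1 →
        p'.eval z * (starRingEnd ℂ) (p'.eval z)
          + q'.eval z * (starRingEnd ℂ) (q'.eval z) = 1 := by
      intro z hz
      have hz1 := circle_mul_conj hz
      have hval := h1 z hz
      have hA : z * p'.eval z = (starRingEnd ℂ) e * c * p.eval z + s * q.eval z := by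
        have h := congrArg (Polynomial.eval z) hXp'
        simpa [hA'] using h
      have hcc : (starRingEnd ℂ) c = c := by rw [hc]; exact Complex.conj_ofReal _
      have hss : (starRingEnd ℂ) s = s := by rw [hs]; exact Complex.conj_ofReal _
      have hAc : (starRingEnd ℂ) z * (starRingEnd ℂ) (p'.eval z)
          = e * c * (starRingEnd ℂ) (p.eval z) + s * (starRingEnd ℂ) (q.eval z) := by
        have h := congrArg (starRingEnd ℂ) hA
        simp only [_root_.map_add, _root_.map_mul, Complex.conj_conj, hcc, hss] at h
        exact h
      have hqz : q'.eval z = (starRingEnd ℂ) e * s * p.eval z - c * q.eval z := by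
        rw [hq'def]; simp
      have hqzc : (starRingEnd ℂ) (q'.eval z)
          = e * s * (starRingEnd ℂ) (p.eval z) - c * (starRingEnd ℂ) (q.eval z) := by
        have h := congrArg (starRingEnd ℂ) hqz
        simp only [map_sub, _root_.map_mul, Complex.conj_conj, hcc, hss] at h
        exact h
      have key : p'.eval z * (starRingEnd ℂ) (p'.eval z)
          = ((starRingEnd ℂ) e * c * p.eval z + s * q.eval z)
            * (e * c * (starRingEnd ℂ) (p.eval z) + s * (starRingEnd ℂ) (q.eval z)) := by
        calc p'.eval z * (starRingEnd ℂ) (p'.eval z)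
            = (z * (starRingEnd ℂ) z) * (p'.eval z * (starRingEnd ℂ) (p'.eval z)) := by
              rw [hz1, one_mul]
          _ = (z * p'.eval z) * ((starRingEnd ℂ) z * (starRingEnd ℂ) (p'.eval z)) := by ring
          _ = _ := by rw [hA, hAc]
      rw [key, hqzc, hqz]
      linear_combination ((c * c + s * s) * (p.eval z) * ((starRingEnd ℂ) (p.eval z))) * hee
        + (c * c + s * s) * hval + hcs
    obtain ⟨w', θ0, φ0, lam, hfold⟩ := IH p' q' hp'deg hq'deg hnorm'
    refine ⟨Fin.cases (θ, φ) w', θ0, φ0, lam, ?_⟩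
    have hlist : (List.ofFn (Fin.cases (θ, φ) w' : Fin (d + 1) → ℝ × ℝ))
        = (θ, φ) :: List.ofFn w' := by
      simp [List.ofFn_succ]
    rw [hlist, List.foldr_cons, hfold]
    have heec : Polynomial.C e * Polynomial.C ((starRingEnd ℂ) e) = 1 := by
      rw [← Polynomial.C_mul, hee, Polynomial.C_1]
    have hcsc : Polynomial.C c * Polynomial.C c + Polynomial.C s * Polynomial.C s
        = 1 := by
      rw [← Polynomial.C_mul, ← Polynomial.C_mul, ← Polynomial.C_add, hcs, Polynomial.C_1]
    rw [gstep, Prod.mk.injEq]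
    constructor
    · show Polynomial.C (e * c) * (Polynomial.X * p') + Polynomial.C (e * s) * q' = p
      rw [hXp', hA', hq'def]
      simp only [Polynomial.C_mul]
      linear_combination ((Polynomial.C c * Polynomial.C c
        + Polynomial.C s * Polynomial.C s) * p) * heec + p * hcsc
    · show Polynomial.C s * (Polynomial.X * p') - Polynomial.C c * q' = q
      rw [hXp', hA', hq'def]
      simp only [Polynomial.C_mul]
      linear_combination q * hcsc

end Aux2



/-- Corollary 2: any polynomial `P` with `deg P ≤ d` and `|P(x)| ≤ 1` on the unit
circle can be implemented as the top-left block of a GQSP circuit: there are angles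
`θ, φ ∈ ℝ^{d+1}`, `λ ∈ ℝ` such that for every unitary `U` the top-left `N×N` block of
`(∏_{j=1}^d R(θ_j,φ_j,0) A) R(θ_0,φ_0,λ)` equals `P(U)`. -/
theorem stmt_14 (d : ℕ) (P : Polynomial ℂ) (hPd : P.natDegree ≤ d)
    (hP : ∀ x : ℂ, ‖x‖ = 1 → ‖P.eval x‖ ≤ 1) :
    ∃ (θ φ : Fin (d + 1) → ℝ) (lam : ℝ),
      ∀ N : ℕ, 1 ≤ N → ∀ U ∈ Matrix.unitaryGroup (Fin N) ℂ,
        block00 N (gqspCircuit N d U θ φ lam) = Polynomial.aeval U P := by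
  classical
  set Pstar := Polynomial.reflect d (P.map (starRingEnd ℂ)) with hPstar
  set F : Polynomial ℂ := Polynomial.X ^ d - P * Pstar with hF
  have hdegPstar : Pstar.natDegree ≤ d := by
    apply natDegree_reflect_le
    rcases eq_or_ne P 0 with rfl | hP0
    · simp
    · rw [Polynomial.natDegree_map]; exact hPd
  have hdegF : F.natDegree ≤ 2 * d := by
    apply le_trans (Polynomial.natDegree_sub_le _ _)
    apply max_le
    · rw [Polynomial.natDegree_X_pow]; omega
    · exact le_trans Polynomial.natDegree_mul_le (by omega)
  have hposF : ∀ z : ℂ, ‖z‖ = 1 → ∃ x : ℝ, 0 ≤ x ∧ F.eval z = z ^ d * x := by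
    intro z hz
    have hz0 := circle_ne_zero hz
    refine ⟨1 - Complex.normSq (P.eval z), ?_, ?_⟩
    · have habs := hP z hz
      have hns : Complex.normSq (P.eval z) ≤ 1 := by
        rw [← Complex.sq_norm]
        nlinarith [norm_nonneg (P.eval z)]
      linarith
    · rw [hF]
      simp only [Polynomial.eval_sub, Polynomial.eval_pow, Polynomial.eval_X,
        Polynomial.eval_mul]
      rw [hPstar, eval_reflect_map_conj hPd z hz0,
        inv_eq_of_mul_eq_one_left (circle_mul_conj hz), Complex.ofReal_sub,
        Complex.ofReal_one, ← Complex.mul_conj]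
      ring
  obtain ⟨Q, hQdeg, hQ⟩ := fejerRiesz d F hdegF hposF
  have h1 : ∀ z : ℂ, ‖z‖ = 1 →
      P.eval z * (starRingEnd ℂ) (P.eval z) + Q.eval z * (starRingEnd ℂ) (Q.eval z) = 1 := by
    intro z hz
    have hz0 := circle_ne_zero hz
    have hE := hQ z hz
    rw [hF] at hE
    simp only [Polynomial.eval_sub, Polynomial.eval_pow, Polynomial.eval_X,
      Polynomial.eval_mul] at hE
    rw [hPstar, eval_reflect_map_conj hPd z hz0,
      inv_eq_of_mul_eq_one_left (circle_mul_conj hz)] at hE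
    have h2 : z ^ d * (1 - (P.eval z * (starRingEnd ℂ) (P.eval z)
        + Q.eval z * (starRingEnd ℂ) (Q.eval z))) = 0 := by
      linear_combination hE
    have h3 := (mul_eq_zero.mp h2).resolve_left (pow_ne_zero d hz0)
    linear_combination -h3
  obtain ⟨w, θ0, φ0, lam, hfold⟩ := gqsp_exists d P Q hPd hQdeg h1
  refine ⟨Fin.cons θ0 (fun j => (w j).1), Fin.cons φ0 (fun j => (w j).2), lam, ?_⟩
  intro N hN U hU
  rw [circuit_block00]
  simp only [Fin.cons_succ, Fin.cons_zero, Prod.mk.eta]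
  rw [hfold]
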